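/- Let A ⊆ ℕ be infinite and f : ℕ → ℕ strictly increasing. Suppose for every s there exists t' such that for all t > t', the interval (a_t, a_{t+1}] between consecutive elements a_t < a_{t+1} of A contains at least s elements of the image of f. Then the image set f⁻¹(A) has asymptotic density 0, i.e., |{k < m : f(k) ∈ A}|/m → 0. -/

import Mathlib

open Filter Topology Classical

/-- `cnt A n = |A ∩ [0,n)|`. -/
noncomputable def cnt (A : Set ℕ) (n : ℕ) : ℕ :=
  ((Finset.range n).filter (· ∈ A)).card

/-- `dens A n = |A ∩ [0,n)| / n`, the density of `A` at `n`. -/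
noncomputable def dens (A : Set ℕ) (n : ℕ) : ℝ := (cnt A n : ℝ) / n

lemma key_count (A : Set ℕ) (hA : {x | x ∈ A}.Infinite) (f : ℕ → ℕ) (hf : StrictMono f)
    (s t' : ℕ)
    (ht : ∀ t > t', s + 1 ≤ ((Finset.Ioc (Nat.nth (· ∈ A) t) (Nat.nth (· ∈ A) (t + 1))).filter
            (· ∈ Set.range f)).card)
    (m : ℕ) :
    (s + 1) * cnt {k | f k ∈ A} m ≤ (s + 1) * (Nat.nth (· ∈ A) (t' + 1) + 1) + m := by
  classical
  set p : ℕ → Prop := (· ∈ A) with hp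
  set C : ℕ := Nat.nth p (t' + 1) + 1 with hC
  set hits : Finset ℕ := (Finset.range m).filter (fun k => f k ∈ A) with hhits
  set misses : Finset ℕ := (Finset.range m).filter (fun k => ¬ f k ∈ A) with hmisses
  set HL : Finset ℕ := hits.filter (fun k => Nat.nth p (t' + 1) < f k) with hHL
  set tk : ℕ → ℕ := fun k => Nat.count p (f k) - 1 with htk
  -- basic facts about members of HL
  have hHLfacts : ∀ k ∈ HL, f k ∈ A ∧ k < m ∧ Nat.nth p (t' + 1) < f k := by
    intro k hk
    simp only [hHL, hhits, Finset.mem_filter, Finset.mem_range] at hk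
    exact ⟨hk.1.2, hk.1.1, hk.2⟩
  have hcount : ∀ k ∈ HL, t' + 2 ≤ Nat.count p (f k) := by
    intro k hk
    obtain ⟨hkA, _, hkgt⟩ := hHLfacts k hk
    calc t' + 2 = Nat.count p (Nat.nth p (t' + 1) + 1) := by
          rw [Nat.count_nth_succ_of_infinite hA]
      _ ≤ Nat.count p (f k) := Nat.count_monotone p hkgt
  have htkgt : ∀ k ∈ HL, t' < tk k := by
    intro k hk
    have := hcount k hk
    simp only [htk]
    omega
  have hfk : ∀ k ∈ HL, Nat.nth p (tk k + 1) = f k := by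
    intro k hk
    have h1 := hcount k hk
    have h2 : tk k + 1 = Nat.count p (f k) := by simp only [htk]; omega
    rw [h2]
    exact Nat.nth_count (hHLfacts k hk).1
  -- key sub-lemma: if p x and nth p t < x then nth p (t+1) ≤ x
  have hstep : ∀ (t x : ℕ), p x → Nat.nth p t < x → Nat.nth p (t + 1) ≤ x := by
    intro t x hx hlt
    have h1 : t + 1 ≤ Nat.count p x := by
      calc t + 1 = Nat.count p (Nat.nth p t + 1) := (Nat.count_nth_succ_of_infinite hA t).symm
        _ ≤ Nat.count p x := Nat.count_monotone p hlt
    have := (Nat.nth_le_nth hA).2 h1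
    rwa [Nat.nth_count hx] at this
  -- block misses
  set g : ℕ → Finset ℕ := fun k =>
    misses.filter (fun j => Nat.nth p (tk k) < f j ∧ f j ≤ Nat.nth p (tk k + 1)) with hg
  have hgcard : ∀ k ∈ HL, s ≤ (g k).card := by
    intro k hk
    obtain ⟨hkA, hkm, _⟩ := hHLfacts k hk
    have hBk := ht (tk k) (htkgt k hk)
    set Bk := (Finset.Ioc (Nat.nth p (tk k)) (Nat.nth p (tk k + 1))).filter
      (· ∈ Set.range f) with hBkdef
    have herase : s ≤ (Bk.erase (f k)).card := by
      have := Finset.pred_card_le_card_erase (a := f k) (s := Bk)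
      omega
    refine le_trans herase (Finset.card_le_card_of_injOn (Function.invFun f) ?_ ?_)
    · intro x hx
      have hxe := Finset.mem_erase.1 hx
      have hxB := hxe.2
      simp only [hBkdef, Finset.mem_filter, Finset.mem_Ioc] at hxB
      obtain ⟨⟨hx1, hx2⟩, hxr⟩ := hxB
      have hfj : f (Function.invFun f x) = x := Function.invFun_eq hxr
      set j := Function.invFun f x
      have hjle : j ≤ k := by
        have : f j ≤ f k := by rw [hfj, ← hfk k hk]; exact hx2
        exact hf.le_iff_le.1 this
      have hjnA : ¬ f j ∈ A := by
        intro hjA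
        have hle : Nat.nth p (tk k + 1) ≤ f j := hstep (tk k) (f j) hjA (by rw [hfj]; exact hx1)
        rw [hfj] at hle
        have hxeq : x = Nat.nth p (tk k + 1) := le_antisymm hx2 hle
        exact hxe.1 (by rw [hxeq, hfk k hk])
      simp only [hg, hmisses, Finset.mem_coe, Finset.mem_filter, Finset.mem_range]
      exact ⟨⟨lt_of_le_of_lt hjle hkm, hjnA⟩, by rw [hfj]; exact hx1, by rw [hfj]; exact hx2⟩
    · intro x hx y hy hxy
      have hxB := (Finset.mem_erase.1 (Finset.mem_coe.1 hx)).2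
      have hyB := (Finset.mem_erase.1 (Finset.mem_coe.1 hy)).2
      simp only [hBkdef, Finset.mem_filter] at hxB hyB
      rw [← Function.invFun_eq hxB.2, ← Function.invFun_eq hyB.2, hxy]
  -- the blocks are pairwise disjoint
  have hdisj : ∀ k ∈ HL, ∀ k' ∈ HL, k ≠ k' → Disjoint (g k) (g k') := by
    intro k hk k' hk' hne
    have htne : tk k ≠ tk k' := by
      intro h
      apply hne
      have : f k = f k' := by rw [← hfk k hk, ← hfk k' hk', h]
      exact hf.injective this
    rw [Finset.disjoint_left]
    intro j hj hj'
    simp only [hg, Finset.mem_filter] at hj hj'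
    rcases lt_or_gt_of_ne htne with h | h
    · have : Nat.nth p (tk k + 1) ≤ Nat.nth p (tk k') := (Nat.nth_le_nth hA).2 h
      omega
    · have : Nat.nth p (tk k' + 1) ≤ Nat.nth p (tk k) := (Nat.nth_le_nth hA).2 h
      omega
  -- s * HL.card ≤ misses.card
  have hmain : s * HL.card ≤ misses.card := by
    have hsub : HL.biUnion g ⊆ misses := by
      intro j hj
      obtain ⟨k, _, hjk⟩ := Finset.mem_biUnion.1 hj
      exact (Finset.mem_filter.1 hjk).1
    calc s * HL.card = ∑ _k ∈ HL, s := by rw [Finset.sum_const, smul_eq_mul, mul_comm]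
      _ ≤ ∑ k ∈ HL, (g k).card := Finset.sum_le_sum hgcard
      _ = (HL.biUnion g).card := (Finset.card_biUnion hdisj).symm
      _ ≤ misses.card := Finset.card_le_card hsub
  -- hits.card ≤ C + HL.card
  have hhitsle : hits.card ≤ C + HL.card := by
    have hsub : hits ⊆ HL ∪ Finset.range C := by
      intro k hk
      by_cases h : Nat.nth p (t' + 1) < f k
      · exact Finset.mem_union_left _ (Finset.mem_filter.2 ⟨hk, h⟩)
      · refine Finset.mem_union_right _ (Finset.mem_range.2 ?_)
        have : k ≤ f k := hf.le_apply
        omega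
    calc hits.card ≤ (HL ∪ Finset.range C).card := Finset.card_le_card hsub
      _ ≤ HL.card + C := by
          refine le_trans (Finset.card_union_le _ _) ?_
          simp
      _ = C + HL.card := by ring
  -- counts add to m
  have hadd : hits.card + misses.card = m := by
    have := Finset.card_filter_add_card_filter_not
      (s := Finset.range m) (p := fun k => f k ∈ A)
    simpa [hhits, hmisses] using this
  have hcnteq : cnt {k | f k ∈ A} m = hits.card := by
    unfold cnt
    congr 1
  have hHLle : HL.card ≤ hits.card := Finset.card_le_card (Finset.filter_subset _ _)
  rw [hcnteq]
  calc (s + 1) * hits.card ≤ (s + 1) * (C + HL.card) := Nat.mul_le_mul_left _ hhitsle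
    _ = (s + 1) * C + (s * HL.card + HL.card) := by ring
    _ ≤ (s + 1) * C + (misses.card + hits.card) :=
        Nat.add_le_add_left (Nat.add_le_add hmain hHLle) _
    _ = (s + 1) * C + m := by rw [Nat.add_comm misses.card, hadd]

theorem stmt15 (A : Set ℕ) (hA : A.Infinite) (f : ℕ → ℕ) (hf : StrictMono f)
    (hyp : ∀ s : ℕ, ∃ t' : ℕ, ∀ t > t',
      s ≤ ((Finset.Ioc (Nat.nth (· ∈ A) t) (Nat.nth (· ∈ A) (t + 1))).filter
            (· ∈ Set.range f)).card) :
    Tendsto (dens {k | f k ∈ A}) atTop (𝓝 0) := by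
  have hA' : {x | x ∈ A}.Infinite := hA
  rw [Metric.tendsto_atTop]
  intro ε hε
  -- choose s with 1/(s+1) < ε/2
  obtain ⟨s, hs⟩ := exists_nat_gt (2 / ε)
  obtain ⟨t', ht'⟩ := hyp (s + 1)
  set C : ℕ := Nat.nth (· ∈ A) (t' + 1) + 1 with hCdef
  obtain ⟨N₀, hN₀⟩ := exists_nat_gt (2 * (C : ℝ) / ε)
  refine ⟨max N₀ 1, fun m hm => ?_⟩
  have hm1 : 1 ≤ m := le_trans (le_max_right _ _) hm
  have hmN₀ : (N₀ : ℝ) ≤ m := by exact_mod_cast le_trans (le_max_left _ _) hm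
  have hmpos : (0 : ℝ) < m := by exact_mod_cast hm1
  have hkey := key_count A hA' f hf s t' ht' m
  have hs1 : (0 : ℝ) < (s : ℝ) + 1 := by positivity
  have hcnt : (cnt {k | f k ∈ A} m : ℝ) ≤ C + m / (s + 1) := by
    have h1 : ((s : ℝ) + 1) * cnt {k | f k ∈ A} m ≤ ((s : ℝ) + 1) * C + m := by
      exact_mod_cast hkey
    have hdm : (m : ℝ) / ((s : ℝ) + 1) * ((s : ℝ) + 1) = m :=
      div_mul_cancel₀ _ (ne_of_gt hs1)
    nlinarith [h1, hdm, hs1]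
  have hdens : dens {k | f k ∈ A} m ≤ (C : ℝ) / m + 1 / (s + 1) := by
    rw [dens, div_le_iff₀ hmpos]
    have hexp : ((C : ℝ) / m + 1 / (s + 1)) * m = C + m / (s + 1) := by
      field_simp
    rw [hexp]
    exact hcnt
  have hnn : 0 ≤ dens {k | f k ∈ A} m := by
    rw [dens]; positivity
  rw [Real.dist_eq, sub_zero, abs_of_nonneg hnn]
  have h1 : (1 : ℝ) / (s + 1) < ε / 2 := by
    rw [div_lt_iff₀ (by positivity : (0:ℝ) < (s:ℝ)+1)]
    rw [div_lt_iff₀ hε] at hs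
    nlinarith
  have h2 : (C : ℝ) / m < ε / 2 := by
    rw [div_lt_iff₀ hmpos]
    have : 2 * (C : ℝ) / ε < m := lt_of_lt_of_le hN₀ hmN₀
    rw [div_lt_iff₀ hε] at this
    nlinarith
  linarith
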